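/- Let m, n ∈ ℤ³ with (m₁n₁, m₂n₂, m₃n₃) ≠ (0,0,0), D(m,n) = 0 (where D is the dual sextic form), and n₁n₂n₃ ≠ 0. Then there exists a unique point [t] ∈ ℙ²(ℤ) (i.e., a primitive vector t ∈ ℤ³ up to sign) such that m ∈ t²ℤ (meaning (m₁,m₂,m₃) = h·(t₁²,t₂²,t₃²) for some integer h) and n·t = 0. -/

import Mathlib

lemma nat_isSquare_of_even_factorization (n : ℕ) (hn : n ≠ 0)
    (h : ∀ p, Even (n.factorization p)) : IsSquare n := by
  refine (isSquare_iff_exists_sq n).mpr ⟨n.factorization.prod fun p e => p ^ (e / 2), ?_⟩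
  conv_lhs => rw [← Nat.factorization_prod_pow_eq_self hn]
  rw [Finsupp.prod, Finsupp.prod, ← Finset.prod_pow]
  refine Finset.prod_congr rfl fun p hp => ?_
  rw [← pow_mul]
  congr 1
  obtain ⟨k, hk⟩ := h p
  omega

lemma key3 (a b c : ℕ) (ha : a ≠ 0) (hb : b ≠ 0) (hc : c ≠ 0)
    (hab : IsSquare (a * b)) (hac : IsSquare (a * c)) :
    ∃ g u v w : ℕ, g ≠ 0 ∧ Nat.gcd (Nat.gcd u v) w = 1 ∧
      a = g * u ^ 2 ∧ b = g * v ^ 2 ∧ c = g * w ^ 2 := by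
  set g := Nat.gcd (Nat.gcd a b) c with hg
  have hgab : Nat.gcd a b ≠ 0 := Nat.gcd_ne_zero_left ha
  have hgne : g ≠ 0 := Nat.gcd_ne_zero_left hgab
  have hga : g ∣ a := (Nat.gcd_dvd_left _ _).trans (Nat.gcd_dvd_left a b)
  have hgb : g ∣ b := (Nat.gcd_dvd_left _ _).trans (Nat.gcd_dvd_right a b)
  have hgc : g ∣ c := Nat.gcd_dvd_right _ _
  have parity : ∀ p, (a.factorization p) % 2 = (b.factorization p) % 2
      ∧ (a.factorization p) % 2 = (c.factorization p) % 2 := by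
    intro p
    have h1 : Even ((a * b).factorization p) := by
      obtain ⟨r, hr⟩ := hab
      rw [hr, ← sq, Nat.factorization_pow]
      exact ⟨r.factorization p, by simp [two_mul]⟩
    have h2 : Even ((a * c).factorization p) := by
      obtain ⟨r, hr⟩ := hac
      rw [hr, ← sq, Nat.factorization_pow]
      exact ⟨r.factorization p, by simp [two_mul]⟩
    rw [Nat.factorization_mul ha hb] at h1
    rw [Nat.factorization_mul ha hc] at h2
    simp only [Finsupp.add_apply] at h1 h2
    rw [Nat.even_iff] at h1 h2
    omega
  have hfg : ∀ p, g.factorization p = min (min (a.factorization p) (b.factorization p))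
      (c.factorization p) := by
    intro p
    rw [hg, Nat.factorization_gcd hgab hc, Nat.factorization_gcd ha hb]
    simp [Finsupp.inf_apply]
  have main : ∀ x, x ≠ 0 → g ∣ x →
      (∀ p, x.factorization p % 2 = a.factorization p % 2) → IsSquare (x / g) := by
    intro x hx hgx hpar
    have hne : x / g ≠ 0 := Nat.div_ne_zero_iff.mpr ⟨hgne,
      (Nat.le_of_dvd (Nat.pos_of_ne_zero hx) hgx)⟩
    refine nat_isSquare_of_even_factorization _ hne fun p => ?_
    rw [Nat.factorization_div hgx]
    simp only [Finsupp.tsub_apply]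
    have h1 := (parity p).1
    have h2 := (parity p).2
    have h3 := hfg p
    have h4 := Nat.factorization_le_iff_dvd hgne hx |>.mpr hgx p
    have h5 := hpar p
    rw [Nat.even_iff]
    omega
  obtain ⟨u, hu⟩ := main a ha hga fun p => rfl
  obtain ⟨v, hv⟩ := main b hb hgb fun p => ((parity p).1).symm
  obtain ⟨w, hw⟩ := main c hc hgc fun p => ((parity p).2).symm
  have hau : a = g * u ^ 2 := by rw [← sq] at hu; rw [← hu, Nat.mul_div_cancel' hga]
  have hbv : b = g * v ^ 2 := by rw [← sq] at hv; rw [← hv, Nat.mul_div_cancel' hgb]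
  have hcw : c = g * w ^ 2 := by rw [← sq] at hw; rw [← hw, Nat.mul_div_cancel' hgc]
  refine ⟨g, u, v, w, hgne, ?_, hau, hbv, hcw⟩
  have e1 : Nat.gcd (Nat.gcd (a / g) (b / g)) (c / g) = 1 := by
    rw [Nat.gcd_div hga hgb, Nat.gcd_div (Nat.dvd_gcd hga hgb) hgc, ← hg, Nat.div_self
      (Nat.pos_of_ne_zero hgne)]
  rw [← sq] at hu hv hw
  rw [hu, hv, hw] at e1
  exact Nat.dvd_one.mp (e1 ▸ Nat.dvd_gcd (Nat.dvd_gcd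
    ((Nat.gcd_dvd_left _ _ |>.trans (Nat.gcd_dvd_left u v)).trans (dvd_pow_self u two_ne_zero))
    ((Nat.gcd_dvd_left _ _ |>.trans (Nat.gcd_dvd_right u v)).trans (dvd_pow_self v two_ne_zero)))
    ((Nat.gcd_dvd_right _ _).trans (dvd_pow_self w two_ne_zero)))

lemma sqfac (x d m : ℤ) (hd : d ≠ 0) (h : x ^ 2 = d ^ 2 * m) : ∃ y, m = y ^ 2 := by
  have hdvd : d ∣ x := by
    rw [← Int.pow_dvd_pow_iff (two_ne_zero)]
    exact ⟨m, h⟩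
  obtain ⟨y, rfl⟩ := hdvd
  refine ⟨y, ?_⟩
  have h2 : d ^ 2 * y ^ 2 = d ^ 2 * m := by linear_combination h
  exact (mul_left_cancel₀ (pow_ne_zero 2 hd) h2).symm

lemma int_sq_eq (a b : ℤ) (h : a ^ 2 = b ^ 2) : a = b ∨ a = -b := by
  have h2 : (a - b) * (a + b) = 0 := by linear_combination h
  rcases mul_eq_zero.mp h2 with h3 | h3
  · left; linarith
  · right; linarith

lemma twoD (m₁ m₂ n₁ n₂ : ℤ) (hm₁ : m₁ ≠ 0) (hm₂ : m₂ ≠ 0) (hn₁ : n₁ ≠ 0) (hn₂ : n₂ ≠ 0)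
    (hE : m₁ * n₁ ^ 2 = m₂ * n₂ ^ 2) :
    ∃ t₁ t₂ h : ℤ, Int.gcd t₁ t₂ = 1 ∧ t₁ ≠ 0 ∧ t₂ ≠ 0 ∧
      m₁ = h * t₁ ^ 2 ∧ m₂ = h * t₂ ^ 2 ∧ n₁ * t₁ + n₂ * t₂ = 0 ∧
      ∀ s₁ s₂ : ℤ, Int.gcd s₁ s₂ = 1 → n₁ * s₁ + n₂ * s₂ = 0 →
        ((s₁, s₂) = (t₁, t₂) ∨ (s₁, s₂) = (-t₁, -t₂)) := by
  have hgpos0 : 0 < Int.gcd n₁ n₂ := Int.gcd_pos_iff.mpr (Or.inl hn₁)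
  have hcop0 : Int.gcd (n₁ / (Int.gcd n₁ n₂ : ℤ)) (n₂ / (Int.gcd n₁ n₂ : ℤ)) = 1 :=
    Int.gcd_div_gcd_div_gcd hgpos0
  obtain ⟨G, hG⟩ : ∃ G : ℤ, G = (Int.gcd n₁ n₂ : ℤ) := ⟨_, rfl⟩
  have hgpos : (0:ℤ) < G := by rw [hG]; exact_mod_cast hgpos0
  have hgn : G ≠ 0 := ne_of_gt hgpos
  obtain ⟨p, hn₁'⟩ : G ∣ n₁ := hG ▸ Int.gcd_dvd_left _ _
  obtain ⟨q, hn₂'⟩ : G ∣ n₂ := hG ▸ Int.gcd_dvd_right _ _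
  have hcop : Int.gcd p q = 1 := by
    rw [← hG, hn₁', hn₂', Int.mul_ediv_cancel_left _ hgn, Int.mul_ediv_cancel_left _ hgn]
      at hcop0
    exact hcop0
  have hpq : IsCoprime p q := Int.isCoprime_iff_gcd_eq_one.mpr hcop
  have hpne : p ≠ 0 := fun h0 => hn₁ (by rw [hn₁', h0, mul_zero])
  have hqne : q ≠ 0 := fun h0 => hn₂ (by rw [hn₂', h0, mul_zero])
  rw [hn₁', hn₂'] at hE
  have hE' : m₁ * p ^ 2 = m₂ * q ^ 2 := by
    have h2 : G ^ 2 * (m₁ * p ^ 2) = G ^ 2 * (m₂ * q ^ 2) := by linear_combination hE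
    exact mul_left_cancel₀ (pow_ne_zero 2 hgn) h2
  have hq2 : q ^ 2 ∣ m₁ := by
    have : q ^ 2 ∣ m₁ * p ^ 2 := ⟨m₂, by linarith [hE']⟩
    exact (hpq.symm.pow).dvd_of_dvd_mul_right this
  obtain ⟨h, hh⟩ := hq2
  have hm₂' : m₂ = h * p ^ 2 := by
    have h2 : (m₂ - h * p ^ 2) * q ^ 2 = 0 := by rw [hh] at hE'; linear_combination - hE'
    rcases mul_eq_zero.mp h2 with h3 | h3
    · linarith
    · exact absurd h3 (pow_ne_zero 2 hqne)
  refine ⟨q, -p, h, ?_, hqne, neg_ne_zero.mpr hpne, by rw [hh]; ring, by rw [hm₂']; ring,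
    by rw [hn₁', hn₂']; ring, ?_⟩
  · rw [Int.gcd]
    simp only [Int.natAbs_neg]
    rw [Nat.gcd_comm]
    exact hcop
  intro s₁ s₂ hsg hssum
  rw [hn₁', hn₂'] at hssum
  have hps : p * s₁ + q * s₂ = 0 := by
    have h2 : G * (p * s₁ + q * s₂) = 0 := by linear_combination hssum
    exact (mul_eq_zero.mp h2).resolve_left hgn
  have hqd : q ∣ s₁ := hpq.symm.dvd_of_dvd_mul_left ⟨-s₂, by linarith [hps]⟩
  obtain ⟨k, rfl⟩ := hqd
  have hs₂ : s₂ = -(p * k) := by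
    have h2 : q * (s₂ + p * k) = 0 := by linear_combination hps
    have := (mul_eq_zero.mp h2).resolve_left hqne
    linarith
  have hk : k = 1 ∨ k = -1 := by
    have h3 : (k.natAbs : ℤ) ∣ 1 := by
      have d1 : k ∣ q * k := ⟨q, mul_comm q k⟩
      have d2 : k ∣ s₂ := hs₂ ▸ ⟨-p, by ring⟩
      have hd := Int.dvd_coe_gcd d1 d2
      rw [hsg] at hd
      exact_mod_cast Int.natAbs_dvd.mpr hd
    have h4 : k.natAbs = 1 := Nat.eq_one_of_dvd_one (by exact_mod_cast h3)
    rcases Int.natAbs_eq k with he | he <;> rw [h4] at he <;> [left; right] <;> exact_mod_cast he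
  rcases hk with rfl | rfl
  · left; simp [hs₂]
  · right; rw [Prod.ext_iff]; constructor
    · simp
    · simp [hs₂]

lemma gcd_sq_one (u v w : ℕ) (h : Nat.gcd (Nat.gcd u v) w = 1) :
    Nat.gcd (Nat.gcd (u ^ 2) (v ^ 2)) (w ^ 2) = 1 := by
  by_contra hne
  rcases Nat.eq_zero_or_pos (Nat.gcd (Nat.gcd (u ^ 2) (v ^ 2)) (w ^ 2)) with h0 | hpos
  · rw [Nat.gcd_eq_zero_iff, Nat.gcd_eq_zero_iff] at h0
    obtain ⟨⟨hu, hv⟩, hw⟩ := h0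
    rw [pow_eq_zero_iff two_ne_zero] at hu hv hw
    subst hu; subst hv; subst hw
    simp at h
  · obtain ⟨p, hp, hpd⟩ := Nat.exists_prime_and_dvd hne
    have h1 : p ∣ u := hp.dvd_of_dvd_pow ((hpd.trans (Nat.gcd_dvd_left _ _)).trans (Nat.gcd_dvd_left _ _))
    have h2 : p ∣ v := hp.dvd_of_dvd_pow ((hpd.trans (Nat.gcd_dvd_left _ _)).trans (Nat.gcd_dvd_right _ _))
    have h3 : p ∣ w := hp.dvd_of_dvd_pow (hpd.trans (Nat.gcd_dvd_right _ _))
    have : p ∣ 1 := h ▸ Nat.dvd_gcd (Nat.dvd_gcd h1 h2) h3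
    exact hp.one_lt.ne' (Nat.dvd_one.mp this)

set_option maxHeartbeats 1000000 in
lemma pos_case (m₁ m₂ m₃ n₁ n₂ n₃ : ℤ) (hm1 : 0 < m₁) (hm2 : 0 < m₂) (hm3 : 0 < m₃)
    (hn1 : n₁ ≠ 0) (hn2 : n₂ ≠ 0) (hn3 : n₃ ≠ 0)
    (hD : m₁ ^ 2 * n₁ ^ 4 + m₂ ^ 2 * n₂ ^ 4 + m₃ ^ 2 * n₃ ^ 4
      - 2 * (m₁ * m₂ * n₁ ^ 2 * n₂ ^ 2 + m₁ * m₃ * n₁ ^ 2 * n₃ ^ 2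
        + m₂ * m₃ * n₂ ^ 2 * n₃ ^ 2) = 0) :
    ∃ t₁ t₂ t₃ : ℤ,
      (Int.gcd (Int.gcd t₁ t₂) t₃ = 1 ∧
        (∃ h : ℤ, m₁ = h * t₁ ^ 2 ∧ m₂ = h * t₂ ^ 2 ∧ m₃ = h * t₃ ^ 2) ∧
        n₁ * t₁ + n₂ * t₂ + n₃ * t₃ = 0) ∧
      ∀ s₁ s₂ s₃ : ℤ,
        (Int.gcd (Int.gcd s₁ s₂) s₃ = 1 ∧
          (∃ h : ℤ, m₁ = h * s₁ ^ 2 ∧ m₂ = h * s₂ ^ 2 ∧ m₃ = h * s₃ ^ 2) ∧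
          n₁ * s₁ + n₂ * s₂ + n₃ * s₃ = 0) →
        ((s₁, s₂, s₃) = (t₁, t₂, t₃) ∨ (s₁, s₂, s₃) = (-t₁, -t₂, -t₃)) := by
  -- pairwise products are squares
  have e12 : (m₃ * n₃ ^ 2 - m₁ * n₁ ^ 2 - m₂ * n₂ ^ 2) ^ 2
      = (2 * n₁ * n₂) ^ 2 * (m₁ * m₂) := by linear_combination hD
  have e13 : (m₂ * n₂ ^ 2 - m₁ * n₁ ^ 2 - m₃ * n₃ ^ 2) ^ 2
      = (2 * n₁ * n₃) ^ 2 * (m₁ * m₃) := by linear_combination hD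
  obtain ⟨y₁₂, hy12⟩ := sqfac _ _ _ (mul_ne_zero (mul_ne_zero two_ne_zero hn1) hn2) e12
  obtain ⟨y₁₃, hy13⟩ := sqfac _ _ _ (mul_ne_zero (mul_ne_zero two_ne_zero hn1) hn3) e13
  -- natAbs versions
  have hA1 : (m₁.natAbs : ℤ) = m₁ := Int.natAbs_of_nonneg hm1.le
  have hA2 : (m₂.natAbs : ℤ) = m₂ := Int.natAbs_of_nonneg hm2.le
  have hA3 : (m₃.natAbs : ℤ) = m₃ := Int.natAbs_of_nonneg hm3.le
  have hab : IsSquare (m₁.natAbs * m₂.natAbs) := by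
    refine ⟨y₁₂.natAbs, ?_⟩
    have : ((m₁.natAbs * m₂.natAbs : ℕ) : ℤ) = ((y₁₂.natAbs * y₁₂.natAbs : ℕ) : ℤ) := by
      push_cast
      rw [abs_of_pos hm1, abs_of_pos hm2, abs_mul_abs_self]
      linear_combination hy12
    exact_mod_cast this
  have hac : IsSquare (m₁.natAbs * m₃.natAbs) := by
    refine ⟨y₁₃.natAbs, ?_⟩
    have : ((m₁.natAbs * m₃.natAbs : ℕ) : ℤ) = ((y₁₃.natAbs * y₁₃.natAbs : ℕ) : ℤ) := by
      push_cast
      rw [abs_of_pos hm1, abs_of_pos hm3, abs_mul_abs_self]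
      linear_combination hy13
    exact_mod_cast this
  obtain ⟨g, u, v, w, hg0, hguvw, ha, hb, hc⟩ := key3 m₁.natAbs m₂.natAbs m₃.natAbs
    (by simpa using hm1.ne') (by simpa using hm2.ne') (by simpa using hm3.ne') hab hac
  have hu0 : u ≠ 0 := by rintro rfl; simp [Int.natAbs_eq_zero] at ha; exact hm1.ne' ha
  have hv0 : v ≠ 0 := by rintro rfl; simp [Int.natAbs_eq_zero] at hb; exact hm2.ne' hb
  have hw0 : w ≠ 0 := by rintro rfl; simp [Int.natAbs_eq_zero] at hc; exact hm3.ne' hc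
  have hm₁' : m₁ = (g : ℤ) * (u : ℤ) ^ 2 := by rw [← hA1, ha]; push_cast; ring
  have hm₂' : m₂ = (g : ℤ) * (v : ℤ) ^ 2 := by rw [← hA2, hb]; push_cast; ring
  have hm₃' : m₃ = (g : ℤ) * (w : ℤ) ^ 2 := by rw [← hA3, hc]; push_cast; ring
  have hgg : Nat.gcd (Nat.gcd m₁.natAbs m₂.natAbs) m₃.natAbs = g := by
    rw [ha, hb, hc, Nat.gcd_mul_left, Nat.gcd_mul_left, gcd_sq_one u v w hguvw, mul_one]
  have hgZ : (g : ℤ) ≠ 0 := Nat.cast_ne_zero.mpr hg0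
  -- the factorization of D
  rw [hm₁', hm₂', hm₃'] at hD
  have factored : ((n₁ * u + n₂ * v + n₃ * w) * (n₁ * u + n₂ * v - n₃ * w)
      * (n₁ * u - n₂ * v + n₃ * w) * (n₁ * u - n₂ * v - n₃ * w)) * (g : ℤ) ^ 2 = 0 := by
    linear_combination hD
  have hprod : (n₁ * u + n₂ * v + n₃ * w) * (n₁ * u + n₂ * v - n₃ * w)
      * (n₁ * u - n₂ * v + n₃ * w) * (n₁ * u - n₂ * v - n₃ * w) = 0 :=
    (mul_eq_zero.mp factored).resolve_right (pow_ne_zero 2 hgZ)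
  have hgcd_int : ∀ a b : ℤ, a.natAbs = u → b.natAbs = v → ∀ c : ℤ, c.natAbs = w →
      Int.gcd (Int.gcd a b) c = 1 := by
    intro a b hau hbv c hcw
    rw [Int.gcd, Int.gcd, hau, hbv, Int.natAbs_natCast, hcw]
    exact hguvw
  have hex : ∃ t₁ t₂ t₃ : ℤ, Int.gcd (Int.gcd t₁ t₂) t₃ = 1 ∧ t₁ ≠ 0 ∧ t₂ ≠ 0 ∧ t₃ ≠ 0 ∧
      m₁ = (g : ℤ) * t₁ ^ 2 ∧ m₂ = (g : ℤ) * t₂ ^ 2 ∧ m₃ = (g : ℤ) * t₃ ^ 2 ∧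
      n₁ * t₁ + n₂ * t₂ + n₃ * t₃ = 0 := by
    have hU : ((u : ℤ)) ≠ 0 := Nat.cast_ne_zero.mpr hu0
    have hV : ((v : ℤ)) ≠ 0 := Nat.cast_ne_zero.mpr hv0
    have hW : ((w : ℤ)) ≠ 0 := Nat.cast_ne_zero.mpr hw0
    rcases mul_eq_zero.mp hprod with h4 | h4
    · rcases mul_eq_zero.mp h4 with h5 | h5
      · rcases mul_eq_zero.mp h5 with h6 | h6
        · exact ⟨u, v, w, hgcd_int _ _ (Int.natAbs_natCast u) (Int.natAbs_natCast v) _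
            (Int.natAbs_natCast w), hU, hV, hW, hm₁', hm₂', hm₃', h6⟩
        · exact ⟨u, v, -w, hgcd_int _ _ (Int.natAbs_natCast u) (Int.natAbs_natCast v) _
            (by simp), hU, hV, neg_ne_zero.mpr hW, hm₁', hm₂',
            by rw [hm₃']; ring, by linear_combination h6⟩
      · exact ⟨u, -v, w, hgcd_int _ _ (Int.natAbs_natCast u) (by simp) _
          (Int.natAbs_natCast w), hU, neg_ne_zero.mpr hV, hW, hm₁',
          by rw [hm₂']; ring, hm₃', by linear_combination h5⟩
    · exact ⟨u, -v, -w, hgcd_int _ _ (Int.natAbs_natCast u) (by simp) _ (by simp),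
        hU, neg_ne_zero.mpr hV, neg_ne_zero.mpr hW, hm₁',
        by rw [hm₂']; ring, by rw [hm₃']; ring, by linear_combination h4⟩
  obtain ⟨t₁, t₂, t₃, htgcd, ht1, ht2, ht3, hmt1, hmt2, hmt3, htsum⟩ := hex
  refine ⟨t₁, t₂, t₃, ⟨htgcd, ⟨(g : ℤ), hmt1, hmt2, hmt3⟩, htsum⟩, ?_⟩
  rintro s₁ s₂ s₃ ⟨hsgcd, ⟨h', hs1, hs2, hs3⟩, hssum⟩
  have hs₁0 : s₁ ≠ 0 := by rintro rfl; simp at hs1; exact hm1.ne' hs1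
  have hs₂0 : s₂ ≠ 0 := by rintro rfl; simp at hs2; exact hm2.ne' hs2
  have hs₃0 : s₃ ≠ 0 := by rintro rfl; simp at hs3; exact hm3.ne' hs3
  have hs₁sq : (0:ℤ) < s₁ ^ 2 := by positivity
  have hh' : 0 < h' := by
    have hpos : 0 < h' * s₁ ^ 2 := hs1 ▸ hm1
    rcases mul_pos_iff.mp hpos with ⟨h5, _⟩ | ⟨_, h6⟩
    · exact h5
    · exact absurd h6 (not_lt.mpr hs₁sq.le)
  -- h' = g
  have hsg' : Nat.gcd (Nat.gcd s₁.natAbs s₂.natAbs) s₃.natAbs = 1 := by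
    rw [Int.gcd, Int.gcd, Int.natAbs_natCast] at hsgcd
    exact hsgcd
  have hgcdm : Nat.gcd (Nat.gcd m₁.natAbs m₂.natAbs) m₃.natAbs = h'.natAbs := by
    rw [hs1, hs2, hs3]
    rw [Int.natAbs_mul, Int.natAbs_mul, Int.natAbs_mul, Int.natAbs_pow, Int.natAbs_pow,
      Int.natAbs_pow, Nat.gcd_mul_left, Nat.gcd_mul_left,
      gcd_sq_one _ _ _ hsg', mul_one]
  have hh'g : h' = (g : ℤ) := by
    rw [← Int.natAbs_of_nonneg hh'.le, ← hgcdm, hgg]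
  rw [hh'g] at hs1 hs2 hs3
  have hsq1 : s₁ ^ 2 = t₁ ^ 2 := mul_left_cancel₀ hgZ (by rw [← hs1, ← hmt1])
  have hsq2 : s₂ ^ 2 = t₂ ^ 2 := mul_left_cancel₀ hgZ (by rw [← hs2, ← hmt2])
  have hsq3 : s₃ ^ 2 = t₃ ^ 2 := mul_left_cancel₀ hgZ (by rw [← hs3, ← hmt3])
  rcases int_sq_eq _ _ hsq1 with h1 | h1 <;>
    rcases int_sq_eq _ _ hsq2 with h2 | h2 <;>
      rcases int_sq_eq _ _ hsq3 with h3 | h3 <;>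
        rw [h1, h2, h3] at hssum ⊢ <;>
        first
          | (left; rfl)
          | (right; rfl)
          | (exact absurd ((mul_eq_zero.mp (by linear_combination htsum - hssum :
              (2:ℤ) * (n₁ * t₁) = 0)).resolve_left two_ne_zero) (mul_ne_zero hn1 ht1))
          | (exact absurd ((mul_eq_zero.mp (by linear_combination htsum + hssum :
              (2:ℤ) * (n₁ * t₁) = 0)).resolve_left two_ne_zero) (mul_ne_zero hn1 ht1))
          | (exact absurd ((mul_eq_zero.mp (by linear_combination htsum - hssum :
              (2:ℤ) * (n₂ * t₂) = 0)).resolve_left two_ne_zero) (mul_ne_zero hn2 ht2))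
          | (exact absurd ((mul_eq_zero.mp (by linear_combination htsum + hssum :
              (2:ℤ) * (n₂ * t₂) = 0)).resolve_left two_ne_zero) (mul_ne_zero hn2 ht2))
          | (exact absurd ((mul_eq_zero.mp (by linear_combination htsum - hssum :
              (2:ℤ) * (n₃ * t₃) = 0)).resolve_left two_ne_zero) (mul_ne_zero hn3 ht3))
          | (exact absurd ((mul_eq_zero.mp (by linear_combination htsum + hssum :
              (2:ℤ) * (n₃ * t₃) = 0)).resolve_left two_ne_zero) (mul_ne_zero hn3 ht3))

/-- If (m₁n₁, m₂n₂, m₃n₃) ≠ (0,0,0), D(m,n) = 0 and n₁n₂n₃ ≠ 0, then there is a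
primitive integer vector t, unique up to sign, with m ∈ t²ℤ and n·t = 0. -/
theorem stmt18 (m₁ m₂ m₃ n₁ n₂ n₃ : ℤ)
    (hmn : ¬ (m₁ * n₁ = 0 ∧ m₂ * n₂ = 0 ∧ m₃ * n₃ = 0))
    (hD : m₁ ^ 2 * n₁ ^ 4 + m₂ ^ 2 * n₂ ^ 4 + m₃ ^ 2 * n₃ ^ 4
      - 2 * (m₁ * m₂ * n₁ ^ 2 * n₂ ^ 2 + m₁ * m₃ * n₁ ^ 2 * n₃ ^ 2
        + m₂ * m₃ * n₂ ^ 2 * n₃ ^ 2) = 0)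
    (hn : n₁ * n₂ * n₃ ≠ 0) :
    ∃ t₁ t₂ t₃ : ℤ,
      (Int.gcd (Int.gcd t₁ t₂) t₃ = 1 ∧
        (∃ h : ℤ, m₁ = h * t₁ ^ 2 ∧ m₂ = h * t₂ ^ 2 ∧ m₃ = h * t₃ ^ 2) ∧
        n₁ * t₁ + n₂ * t₂ + n₃ * t₃ = 0) ∧
      ∀ s₁ s₂ s₃ : ℤ,
        (Int.gcd (Int.gcd s₁ s₂) s₃ = 1 ∧
          (∃ h : ℤ, m₁ = h * s₁ ^ 2 ∧ m₂ = h * s₂ ^ 2 ∧ m₃ = h * s₃ ^ 2) ∧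
          n₁ * s₁ + n₂ * s₂ + n₃ * s₃ = 0) →
        ((s₁, s₂, s₃) = (t₁, t₂, t₃) ∨ (s₁, s₂, s₃) = (-t₁, -t₂, -t₃)) := by
  have hn1 : n₁ ≠ 0 := fun h => hn (by rw [h]; ring)
  have hn2 : n₂ ≠ 0 := fun h => hn (by rw [h]; ring)
  have hn3 : n₃ ≠ 0 := fun h => hn (by rw [h]; ring)
  by_cases hm10 : m₁ = 0
  · -- m₁ = 0
    subst hm10
    have hsq : (m₂ * n₂ ^ 2 - m₃ * n₃ ^ 2) ^ 2 = 0 := by linear_combination hD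
    have hE : m₂ * n₂ ^ 2 = m₃ * n₃ ^ 2 := by
      have := pow_eq_zero_iff two_ne_zero |>.mp hsq; linarith
    have hm2 : m₂ ≠ 0 := by
      rintro rfl
      have hm3 : m₃ = 0 := by
        have h0 : m₃ * n₃ ^ 2 = 0 := by linarith
        rcases mul_eq_zero.mp h0 with h | h
        · exact h
        · exact absurd h (pow_ne_zero 2 hn3)
      exact hmn ⟨by ring, by ring, by rw [hm3]; ring⟩
    have hm3 : m₃ ≠ 0 := by
      rintro rfl
      refine hm2 ?_
      have h0 : m₂ * n₂ ^ 2 = 0 := by linarith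
      rcases mul_eq_zero.mp h0 with h | h
      · exact h
      · exact absurd h (pow_ne_zero 2 hn2)
    obtain ⟨t₂', t₃', h, hgcd2, ht2, ht3, hmeq2, hmeq3, hsum2, huniq2⟩ :=
      twoD m₂ m₃ n₂ n₃ hm2 hm3 hn2 hn3 hE
    refine ⟨0, t₂', t₃', ⟨?_, ⟨h, by ring, hmeq2, hmeq3⟩, by linear_combination hsum2⟩, ?_⟩
    · simp only [Int.gcd, Int.natAbs_zero, Int.natAbs_natCast, Nat.gcd_zero_left] at hgcd2 ⊢
      exact hgcd2
    rintro s₁ s₂ s₃ ⟨hsgcd, ⟨h', hs1, hs2, hs3⟩, hssum⟩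
    have hh' : h' ≠ 0 := by rintro rfl; rw [zero_mul] at hs2; exact hm2 hs2
    have hs10 : s₁ = 0 := by
      have h0 : h' * s₁ ^ 2 = 0 := hs1.symm
      rcases mul_eq_zero.mp h0 with h | h
      · exact absurd h hh'
      · exact pow_eq_zero_iff two_ne_zero |>.mp h
    subst hs10
    have hsg2 : Int.gcd s₂ s₃ = 1 := by
      simp only [Int.gcd, Int.natAbs_zero, Int.natAbs_natCast, Nat.gcd_zero_left] at hsgcd
      exact hsgcd
    rcases huniq2 s₂ s₃ hsg2 (by linear_combination hssum) with heq | heq <;>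
      simp only [Prod.mk.injEq] at heq
    · left; simp [heq.1, heq.2]
    · right; simp [heq.1, heq.2]
  by_cases hm20 : m₂ = 0
  · subst hm20
    have hsq : (m₁ * n₁ ^ 2 - m₃ * n₃ ^ 2) ^ 2 = 0 := by linear_combination hD
    have hE : m₁ * n₁ ^ 2 = m₃ * n₃ ^ 2 := by
      have := pow_eq_zero_iff two_ne_zero |>.mp hsq; linarith
    have hm3 : m₃ ≠ 0 := by
      rintro rfl
      refine hm10 ?_
      have h0 : m₁ * n₁ ^ 2 = 0 := by linarith
      rcases mul_eq_zero.mp h0 with h | h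
      · exact h
      · exact absurd h (pow_ne_zero 2 hn1)
    obtain ⟨t₁', t₃', h, hgcd2, ht1, ht3, hmeq1, hmeq3, hsum2, huniq2⟩ :=
      twoD m₁ m₃ n₁ n₃ hm10 hm3 hn1 hn3 hE
    refine ⟨t₁', 0, t₃', ⟨?_, ⟨h, hmeq1, by ring, hmeq3⟩, by linear_combination hsum2⟩, ?_⟩
    · simp only [Int.gcd, Int.natAbs_zero, Int.natAbs_natCast, Nat.gcd_zero_right] at hgcd2 ⊢
      exact hgcd2
    rintro s₁ s₂ s₃ ⟨hsgcd, ⟨h', hs1, hs2, hs3⟩, hssum⟩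
    have hh' : h' ≠ 0 := by rintro rfl; rw [zero_mul] at hs1; exact hm10 hs1
    have hs20 : s₂ = 0 := by
      have h0 : h' * s₂ ^ 2 = 0 := hs2.symm
      rcases mul_eq_zero.mp h0 with h | h
      · exact absurd h hh'
      · exact pow_eq_zero_iff two_ne_zero |>.mp h
    subst hs20
    have hsg2 : Int.gcd s₁ s₃ = 1 := by
      simp only [Int.gcd, Int.natAbs_zero, Int.natAbs_natCast, Nat.gcd_zero_right] at hsgcd
      exact hsgcd
    rcases huniq2 s₁ s₃ hsg2 (by linear_combination hssum) with heq | heq <;>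
      simp only [Prod.mk.injEq] at heq
    · left; simp [heq.1, heq.2]
    · right; simp [heq.1, heq.2]
  by_cases hm30 : m₃ = 0
  · subst hm30
    have hsq : (m₁ * n₁ ^ 2 - m₂ * n₂ ^ 2) ^ 2 = 0 := by linear_combination hD
    have hE : m₁ * n₁ ^ 2 = m₂ * n₂ ^ 2 := by
      have := pow_eq_zero_iff two_ne_zero |>.mp hsq; linarith
    obtain ⟨t₁', t₂', h, hgcd2, ht1, ht2, hmeq1, hmeq2, hsum2, huniq2⟩ :=
      twoD m₁ m₂ n₁ n₂ hm10 hm20 hn1 hn2 hE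
    refine ⟨t₁', t₂', 0, ⟨?_, ⟨h, hmeq1, hmeq2, by ring⟩, by linear_combination hsum2⟩, ?_⟩
    · simp only [Int.gcd, Int.natAbs_zero, Int.natAbs_natCast, Nat.gcd_zero_right] at hgcd2 ⊢
      exact hgcd2
    rintro s₁ s₂ s₃ ⟨hsgcd, ⟨h', hs1, hs2, hs3⟩, hssum⟩
    have hh' : h' ≠ 0 := by rintro rfl; rw [zero_mul] at hs1; exact hm10 hs1
    have hs30 : s₃ = 0 := by
      have h0 : h' * s₃ ^ 2 = 0 := hs3.symm
      rcases mul_eq_zero.mp h0 with h | h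
      · exact absurd h hh'
      · exact pow_eq_zero_iff two_ne_zero |>.mp h
    subst hs30
    have hsg2 : Int.gcd s₁ s₂ = 1 := by
      simp only [Int.gcd, Int.natAbs_zero, Int.natAbs_natCast, Nat.gcd_zero_right] at hsgcd
      exact hsgcd
    rcases huniq2 s₁ s₂ hsg2 (by linear_combination hssum) with heq | heq <;>
      simp only [Prod.mk.injEq] at heq
    · left; simp [heq.1, heq.2]
    · right; simp [heq.1, heq.2]
  -- all nonzero
  have e12 : (m₃ * n₃ ^ 2 - m₁ * n₁ ^ 2 - m₂ * n₂ ^ 2) ^ 2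
      = (2 * n₁ * n₂) ^ 2 * (m₁ * m₂) := by linear_combination hD
  have e13 : (m₂ * n₂ ^ 2 - m₁ * n₁ ^ 2 - m₃ * n₃ ^ 2) ^ 2
      = (2 * n₁ * n₃) ^ 2 * (m₁ * m₃) := by linear_combination hD
  obtain ⟨y₁₂, hy12⟩ := sqfac _ _ _ (mul_ne_zero (mul_ne_zero two_ne_zero hn1) hn2) e12
  obtain ⟨y₁₃, hy13⟩ := sqfac _ _ _ (mul_ne_zero (mul_ne_zero two_ne_zero hn1) hn3) e13
  have h12pos : 0 < m₁ * m₂ := by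
    rcases (sq_nonneg y₁₂).lt_or_eq with h | h
    · rw [hy12]; exact h
    · exact absurd (hy12.trans h.symm) (mul_ne_zero hm10 hm20)
  have h13pos : 0 < m₁ * m₃ := by
    rcases (sq_nonneg y₁₃).lt_or_eq with h | h
    · rw [hy13]; exact h
    · exact absurd (hy13.trans h.symm) (mul_ne_zero hm10 hm30)
  rcases lt_or_gt_of_ne hm10 with hneg | hpos
  · -- all negative
    have hm2neg : m₂ < 0 := by
      rcases mul_pos_iff.mp h12pos with ⟨h1, _⟩ | ⟨_, h2⟩
      · exact absurd h1 (not_lt.mpr hneg.le)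
      · exact h2
    have hm3neg : m₃ < 0 := by
      rcases mul_pos_iff.mp h13pos with ⟨h1, _⟩ | ⟨_, h2⟩
      · exact absurd h1 (not_lt.mpr hneg.le)
      · exact h2
    obtain ⟨t₁, t₂, t₃, ⟨htgcd, ⟨h, hh1, hh2, hh3⟩, htsum⟩, huniq⟩ :=
      pos_case (-m₁) (-m₂) (-m₃) n₁ n₂ n₃ (by linarith) (by linarith) (by linarith)
        hn1 hn2 hn3 (by linear_combination hD)
    refine ⟨t₁, t₂, t₃, ⟨htgcd, ⟨-h, by linear_combination -hh1, by linear_combination -hh2,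
      by linear_combination -hh3⟩, htsum⟩, ?_⟩
    rintro s₁ s₂ s₃ ⟨hsgcd, ⟨h', hs1, hs2, hs3⟩, hssum⟩
    exact huniq s₁ s₂ s₃ ⟨hsgcd, ⟨-h', by linear_combination -hs1, by linear_combination -hs2,
      by linear_combination -hs3⟩, hssum⟩
  · have hm2pos : 0 < m₂ := by
      rcases mul_pos_iff.mp h12pos with ⟨_, h2⟩ | ⟨h1, _⟩
      · exact h2
      · exact absurd h1 (not_lt.mpr hpos.le)
    have hm3pos : 0 < m₃ := by
      rcases mul_pos_iff.mp h13pos with ⟨_, h2⟩ | ⟨h1, _⟩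
      · exact h2
      · exact absurd h1 (not_lt.mpr hpos.le)
    exact pos_case m₁ m₂ m₃ n₁ n₂ n₃ hpos hm2pos hm3pos hn1 hn2 hn3 hD
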